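/- For d ≥ 2 and 1 ≤ j ≤ d−1, the polynomial B^+_{d,j}(t) satisfies B^+_{d,j}(t) = 2(d−2) t B^+_{d−1,j}(t) + 2t(1−t) d/dt B^+_{d−1,j}(t) + B_{d−1,j}(t), where B_{d,j}(t) = Σ_{σ ∈ B_d, σ_1=j} t^{des_B(σ)}. -/
import Mathlib


/-- The signed value at position `i` of `f : Fin d → Fin d × Bool`. -/
def BVal (d : ℕ) (f : Fin d → Fin d × Bool) (i : Fin d) : ℤ :=
  if (f i).2 then ((f i).1 : ℤ) + 1 else -(((f i).1 : ℤ) + 1)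

/-- `σ_{k+1}` in one-line notation (`k` is `0`-based); `0` out of range. -/
def sval (d : ℕ) (f : Fin d → Fin d × Bool) (k : ℕ) : ℤ :=
  if h : k < d then BVal d f ⟨k, h⟩ else 0

/-- `f` encodes a signed permutation of `{1,…,d}`. -/
def IsSignedPerm (d : ℕ) (f : Fin d → Fin d × Bool) : Prop :=
  Function.Injective fun i => (f i).1

instance (d : ℕ) (f : Fin d → Fin d × Bool) : Decidable (IsSignedPerm d f) := by
  unfold IsSignedPerm; infer_instance

/-- The type-B descent number: `|{i ∈ [0,d−1] : σ_i > σ_{i+1}}|` with `σ_0 = 0`. -/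
def desB (d : ℕ) (f : Fin d → Fin d × Bool) : ℕ :=
  ((Finset.range d).filter fun i =>
    sval d f i < if i = 0 then (0 : ℤ) else sval d f (i - 1)).card

/-- Signed permutations with `σ_1 = j` and `σ_d > 0`. -/
def BplusSet (d : ℕ) (j : ℤ) : Finset (Fin d → Fin d × Bool) :=
  Finset.univ.filter fun f => IsSignedPerm d f ∧ sval d f 0 = j ∧ 0 < sval d f (d - 1)

/-- Signed permutations with `σ_1 = j` and `σ_d < 0`. -/
def BminusSet (d : ℕ) (j : ℤ) : Finset (Fin d → Fin d × Bool) :=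
  Finset.univ.filter fun f => IsSignedPerm d f ∧ sval d f 0 = j ∧ sval d f (d - 1) < 0

open Polynomial

/-- The `j`-Eulerian polynomial of type `B^+`:
`B^+_{d,j}(t) = ∑_{σ ∈ B_d, σ_1=j, σ_d>0} t^{des_B(σ)}`. -/
noncomputable def BplusPoly (d : ℕ) (j : ℤ) : Polynomial ℝ :=
  ∑ f ∈ BplusSet d j, X ^ desB d f

/-- The `j`-Eulerian polynomial of type `B^-`:
`B^−_{d,j}(t) = ∑_{σ ∈ B_d, σ_1=j, σ_d<0} t^{des_B(σ)}`. -/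
noncomputable def BminusPoly (d : ℕ) (j : ℤ) : Polynomial ℝ :=
  ∑ f ∈ BminusSet d j, X ^ desB d f

/-- The `j`-Eulerian polynomial of type `B`:
`B_{d,j}(t) = ∑_{σ ∈ B_d, σ_1=j} t^{des_B(σ)}`. -/
noncomputable def BPoly (d : ℕ) (j : ℤ) : Polynomial ℝ :=
  ∑ f ∈ Finset.univ.filter (fun f : Fin d → Fin d × Bool =>
      IsSignedPerm d f ∧ sval d f 0 = j), X ^ desB d f

open Finset Polynomial

namespace BRec

/-- lift an entry of a `Fin n`-signed perm to a `Fin (n+1)` one. -/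
def lift {n : ℕ} (x : Fin n × Bool) : Fin (n+1) × Bool := (x.1.castSucc, x.2)

/-- insert the value `n+1` with sign `s` at (0-based) position `p`. -/
def ins (n : ℕ) (τ : Fin n → Fin n × Bool) (p : ℕ) (s : Bool) :
    Fin (n+1) → Fin (n+1) × Bool :=
  fun i =>
    if (i : ℕ) = p then (Fin.last n, s)
    else if (i : ℕ) < p then
      (if h2 : (i : ℕ) < n then lift (τ ⟨i, h2⟩) else (Fin.last n, s))
    else
      (if h2 : (i : ℕ) - 1 < n then lift (τ ⟨(i : ℕ) - 1, h2⟩) else (Fin.last n, s))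

/-- delete the entry at position `p`. -/
def del (n : ℕ) (f : Fin (n+1) → Fin (n+1) × Bool) (p : ℕ) : Fin n → Fin n × Bool :=
  fun k =>
    let i : Fin (n+1) := if (k : ℕ) < p then k.castSucc else k.succ
    (⟨((f i).1 : ℕ) % n, Nat.mod_lt _ k.pos⟩, (f i).2)

lemma sval_bound (n : ℕ) (τ : Fin n → Fin n × Bool) (k : ℕ) :
    -(n : ℤ) ≤ sval n τ k ∧ sval n τ k ≤ n := by
  unfold sval
  split
  · next h =>
    unfold BVal
    have h1 : ((τ ⟨k, h⟩).1 : ℤ) + 1 ≤ n := by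
      have := (τ ⟨k, h⟩).1.isLt
      omega
    have h0 : (0:ℤ) ≤ ((τ ⟨k, h⟩).1 : ℤ) := Int.ofNat_nonneg _
    split <;> omega
  · constructor <;> simp

lemma sval_ins_lt (n : ℕ) (τ : Fin n → Fin n × Bool) (p : ℕ) (s : Bool)
    (hp : p ≤ n) (k : ℕ) (hk : k < p) :
    sval (n+1) (ins n τ p s) k = sval n τ k := by
  have hkn : k < n := lt_of_lt_of_le hk hp
  unfold sval
  rw [dif_pos (by omega), dif_pos hkn]
  unfold BVal ins
  simp only [Fin.ne_of_lt, if_neg (by omega : ¬ (k = p)), if_pos hk, dif_pos hkn]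
  simp [lift]

lemma sval_ins_eq (n : ℕ) (τ : Fin n → Fin n × Bool) (p : ℕ) (s : Bool)
    (hp : p ≤ n) :
    sval (n+1) (ins n τ p s) p = if s then ((n:ℤ)+1) else -((n:ℤ)+1) := by
  unfold sval
  rw [dif_pos (by omega)]
  unfold BVal ins
  simp [Fin.last]

lemma sval_ins_gt (n : ℕ) (τ : Fin n → Fin n × Bool) (p : ℕ) (s : Bool)
    (k : ℕ) (hk1 : p < k) (hk2 : k ≤ n) :
    sval (n+1) (ins n τ p s) k = sval n τ (k-1) := by
  have hkn : k - 1 < n := by omega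
  unfold sval
  rw [dif_pos (by omega), dif_pos hkn]
  unfold BVal ins
  simp only [if_neg (by omega : ¬ (k = p)), if_neg (by omega : ¬ (k < p)), dif_pos hkn]
  simp [lift]

end BRec
namespace BRec
lemma ins_eq_of_eq (n : ℕ) (τ : Fin n → Fin n × Bool) (p : ℕ) (s : Bool)
    (i : Fin (n+1)) (hip : (i:ℕ) = p) : ins n τ p s i = (Fin.last n, s) := by
  simp [ins, hip]

lemma ins_fst_of_ne (n : ℕ) (τ : Fin n → Fin n × Bool) (p : ℕ) (s : Bool)
    (hp : p ≤ n) (i : Fin (n+1)) (hip : (i:ℕ) ≠ p) :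
    ∃ k : Fin n, ins n τ p s i = lift (τ k) ∧
      (k : ℕ) = (if (i:ℕ) < p then (i:ℕ) else (i:ℕ) - 1) := by
  by_cases h : (i:ℕ) < p
  · have h2 : (i:ℕ) < n := by omega
    refine ⟨⟨i, h2⟩, ?_, by simp [h]⟩
    simp [ins, hip, h, dif_pos h2]
  · have h2 : (i:ℕ) - 1 < n := by have := i.isLt; omega
    refine ⟨⟨(i:ℕ) - 1, h2⟩, ?_, by simp [h]⟩
    simp [ins, hip, h, dif_pos h2]

lemma isSignedPerm_ins (n : ℕ) (τ : Fin n → Fin n × Bool) (p : ℕ) (s : Bool)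
    (hp : p ≤ n) (ht : IsSignedPerm n τ) : IsSignedPerm (n+1) (ins n τ p s) := by
  intro i i' h
  simp only at h
  by_cases hi : (i:ℕ) = p <;> by_cases hi' : (i':ℕ) = p
  · exact Fin.ext (by omega)
  · exfalso
    obtain ⟨k, hk, -⟩ := ins_fst_of_ne n τ p s hp i' hi'
    rw [ins_eq_of_eq n τ p s i hi, hk] at h
    have : ((Fin.last n : Fin (n+1)) : ℕ) = ((τ k).1.castSucc : ℕ) := congrArg Fin.val h
    simp [Fin.last] at this
    have := (τ k).1.isLt
    omega
  · exfalso
    obtain ⟨k, hk, -⟩ := ins_fst_of_ne n τ p s hp i hi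
    rw [ins_eq_of_eq n τ p s i' hi', hk] at h
    have : ((τ k).1.castSucc : ℕ) = ((Fin.last n : Fin (n+1)) : ℕ) := congrArg Fin.val h
    simp [Fin.last] at this
    have := (τ k).1.isLt
    omega
  · obtain ⟨k, hk, hkv⟩ := ins_fst_of_ne n τ p s hp i hi
    obtain ⟨k', hk', hkv'⟩ := ins_fst_of_ne n τ p s hp i' hi'
    rw [hk, hk'] at h
    have hkk : k = k' := by
      apply ht
      simpa [lift, Fin.castSucc_inj] using h
    have hv : (k:ℕ) = (k':ℕ) := by rw [hkk]
    rw [hkv, hkv'] at hv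
    have := i.isLt; have := i'.isLt
    apply Fin.ext
    split_ifs at hv <;> omega
end BRec
namespace BRec

def dcond (d : ℕ) (f : Fin d → Fin d × Bool) (i : ℕ) : Prop :=
  sval d f i < if i = 0 then (0 : ℤ) else sval d f (i - 1)

instance (d : ℕ) (f : Fin d → Fin d × Bool) (i : ℕ) : Decidable (dcond d f i) := by
  unfold dcond; infer_instance

lemma desB_eq_sum (d : ℕ) (f : Fin d → Fin d × Bool) :
    desB d f = ∑ i ∈ Finset.range d, (if dcond d f i then 1 else 0) := by
  rw [desB, Finset.card_filter]
  rfl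

lemma dcond_ins_lt (n : ℕ) (τ : Fin n → Fin n × Bool) (p : ℕ) (s : Bool)
    (hp : p ≤ n) (i : ℕ) (hi : i < p) :
    dcond (n+1) (ins n τ p s) i ↔ dcond n τ i := by
  unfold dcond
  rw [sval_ins_lt n τ p s hp i hi]
  rcases Nat.eq_zero_or_pos i with h0 | h0
  · simp [h0]
  · rw [if_neg (by omega), if_neg (by omega), sval_ins_lt n τ p s hp (i-1) (by omega)]

lemma dcond_ins_gt (n : ℕ) (τ : Fin n → Fin n × Bool) (p : ℕ) (s : Bool)
    (hp1 : 1 ≤ p) (k : ℕ) (hk1 : p < k) (hk2 : k < n) :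
    dcond (n+1) (ins n τ p s) (k+1) ↔ dcond n τ k := by
  unfold dcond
  rw [sval_ins_gt n τ p s (k+1) (by omega) (by omega)]
  rw [if_neg (by omega), if_neg (by omega)]
  rw [Nat.add_sub_cancel, sval_ins_gt n τ p s k hk1 (by omega)]

lemma dcond_ins_at (n : ℕ) (τ : Fin n → Fin n × Bool) (p : ℕ) (s : Bool)
    (hp1 : 1 ≤ p) (hp2 : p ≤ n) :
    (dcond (n+1) (ins n τ p s) p ↔ s = false) := by
  unfold dcond
  have hp0 : ¬ (p = 0) := by omega
  rw [sval_ins_eq n τ p s hp2, if_neg hp0, sval_ins_lt n τ p s hp2 (p-1) (by omega)]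
  have hb := sval_bound n τ (p-1)
  obtain ⟨hb1, hb2⟩ := hb
  cases s <;> simp <;> omega

lemma dcond_ins_after (n : ℕ) (τ : Fin n → Fin n × Bool) (p : ℕ) (s : Bool)
    (hp1 : 1 ≤ p) (hp2 : p < n) :
    (dcond (n+1) (ins n τ p s) (p+1) ↔ s = true) := by
  unfold dcond
  rw [if_neg (by omega : ¬ (p + 1 = 0)), Nat.add_sub_cancel,
    sval_ins_eq n τ p s (by omega),
    sval_ins_gt n τ p s (p+1) (by omega) (by omega), Nat.add_sub_cancel]
  have hb := sval_bound n τ p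
  obtain ⟨hb1, hb2⟩ := hb
  cases s <;> simp <;> omega

lemma desB_ins_interior (n : ℕ) (τ : Fin n → Fin n × Bool) (p : ℕ) (s : Bool)
    (hp1 : 1 ≤ p) (hp2 : p < n) :
    desB (n+1) (ins n τ p s) + (if dcond n τ p then 1 else 0) = desB n τ + 1 := by
  have key : ∀ (d : ℕ) (g : ℕ → ℕ), p + 1 ≤ d →
      ∑ i ∈ Finset.range d, g i =
        ((∑ i ∈ Finset.range p, g i) + g p) + ∑ i ∈ Finset.range (d - (p+1)), g (p+1+i) := by
    intro d g hd
    rw [← Finset.sum_range_add_sum_Ico g (show p+1 ≤ d by omega), Finset.sum_range_succ,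
      Finset.sum_Ico_eq_sum_range]
  rw [desB_eq_sum, desB_eq_sum, key (n+1) _ (by omega), key n _ (by omega)]
  have e1 : ∀ i ∈ Finset.range p, (if dcond (n+1) (ins n τ p s) i then 1 else 0)
      = (if dcond n τ i then (1:ℕ) else 0) := by
    intro i hi
    rw [Finset.mem_range] at hi
    simp [dcond_ins_lt n τ p s (le_of_lt hp2) i hi]
  rw [Finset.sum_congr rfl e1]
  have hnp : n + 1 - (p+1) = (n - (p+1)) + 1 := by omega
  rw [hnp, Finset.sum_range_succ']
  have e2 : ∀ i ∈ Finset.range (n - (p + 1)),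
      (if dcond (n+1) (ins n τ p s) (p+1+(i+1)) then 1 else 0)
        = (if dcond n τ (p+1+i) then (1:ℕ) else 0) := by
    intro i hi
    rw [Finset.mem_range] at hi
    have h : p + 1 + (i+1) = (p + 1 + i) + 1 := by ring
    rw [h]
    simp only [dcond_ins_gt n τ p s hp1 (p+1+i) (by omega) (by omega)]
  rw [Finset.sum_congr rfl e2]
  have e3 := dcond_ins_at n τ p s hp1 (le_of_lt hp2)
  have e4 := dcond_ins_after n τ p s hp1 hp2
  cases s
  · rw [if_pos (e3.mpr rfl), if_neg (by simp [e4])]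
    omega
  · rw [if_neg (by simp [e3]), if_pos (e4.mpr rfl)]
    omega

lemma desB_ins_last (n : ℕ) (τ : Fin n → Fin n × Bool) (hn : 1 ≤ n) :
    desB (n+1) (ins n τ n true) = desB n τ := by
  rw [desB_eq_sum, desB_eq_sum, Finset.sum_range_succ]
  have e1 : ∀ i ∈ Finset.range n, (if dcond (n+1) (ins n τ n true) i then 1 else 0)
      = (if dcond n τ i then (1:ℕ) else 0) := by
    intro i hi
    rw [Finset.mem_range] at hi
    simp [dcond_ins_lt n τ n true le_rfl i hi]
  rw [Finset.sum_congr rfl e1]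
  have h : ¬ dcond (n+1) (ins n τ n true) n := by
    unfold dcond
    rw [sval_ins_eq n τ n true le_rfl, if_neg (by omega : ¬ (n = 0)),
      sval_ins_lt n τ n true le_rfl (n-1) (by omega)]
    obtain ⟨hb1, hb2⟩ := sval_bound n τ (n-1)
    simp only [if_pos trivial]
    omega
  rw [if_neg h, Nat.add_zero]

end BRec
namespace BRec

lemma lift_injective {n : ℕ} : Function.Injective (lift (n := n)) := by
  intro a b h
  unfold lift at h
  obtain ⟨h1, h2⟩ := Prod.mk.injEq .. ▸ h
  exact Prod.ext (Fin.castSucc_inj.mp (by exact h1)) h2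

lemma ins_mem_interior (n : ℕ) (j : ℤ) (τ : Fin n → Fin n × Bool) (p : ℕ) (s : Bool)
    (hp1 : 1 ≤ p) (hp2 : p < n) (hτ : τ ∈ BplusSet n j) :
    ins n τ p s ∈ BplusSet (n+1) j := by
  simp only [BplusSet, Finset.mem_filter, Finset.mem_univ, true_and] at hτ ⊢
  obtain ⟨h1, h2, h3⟩ := hτ
  refine ⟨isSignedPerm_ins n τ p s (by omega) h1, ?_, ?_⟩
  · rw [sval_ins_lt n τ p s (by omega) 0 (by omega)]; exact h2
  · have hn : n + 1 - 1 = n := rfl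
    rw [hn, sval_ins_gt n τ p s n hp2 le_rfl]; exact h3

lemma ins_mem_last (n : ℕ) (j : ℤ) (τ : Fin n → Fin n × Bool) (hn : 1 ≤ n)
    (h1 : IsSignedPerm n τ) (h2 : sval n τ 0 = j) :
    ins n τ n true ∈ BplusSet (n+1) j := by
  simp only [BplusSet, Finset.mem_filter, Finset.mem_univ, true_and]
  refine ⟨isSignedPerm_ins n τ n true le_rfl h1, ?_, ?_⟩
  · rw [sval_ins_lt n τ n true le_rfl 0 (by omega)]; exact h2
  · have hh : n + 1 - 1 = n := rfl
    rw [hh, sval_ins_eq n τ n true le_rfl, if_pos rfl]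
    positivity

/-- the embedding of old positions into new positions -/
def emb (n p : ℕ) (k : Fin n) : Fin (n+1) :=
  if (k : ℕ) < p then k.castSucc else k.succ

lemma emb_val (n p : ℕ) (k : Fin n) :
    ((emb n p k : Fin (n+1)) : ℕ) = if (k : ℕ) < p then (k : ℕ) else (k : ℕ) + 1 := by
  unfold emb; split <;> simp

lemma emb_val_ne (n p : ℕ) (k : Fin n) : ((emb n p k : Fin (n+1)) : ℕ) ≠ p := by
  rw [emb_val]; split <;> omega

lemma ins_emb (n : ℕ) (τ : Fin n → Fin n × Bool) (p : ℕ) (s : Bool) (hp : p ≤ n)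
    (k : Fin n) : ins n τ p s (emb n p k) = lift (τ k) := by
  obtain ⟨m, hm, hmv⟩ := ins_fst_of_ne n τ p s hp (emb n p k) (emb_val_ne n p k)
  have : m = k := by
    apply Fin.ext
    rw [hmv, emb_val]
    by_cases h : (k : ℕ) < p <;> simp [h] <;> omega
  rw [hm, this]

lemma ins_inj (n : ℕ) (τ τ' : Fin n → Fin n × Bool) (p p' : ℕ) (s s' : Bool)
    (hp1 : 1 ≤ p) (hp2 : p ≤ n) (hp1' : 1 ≤ p') (hp2' : p' ≤ n)
    (h : ins n τ p s = ins n τ' p' s') : τ = τ' ∧ p = p' ∧ s = s' := by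
  have hpp : p = p' := by
    by_contra hne
    have hi : ((⟨p, by omega⟩ : Fin (n+1)) : ℕ) ≠ p' := hne
    obtain ⟨k, hk, -⟩ := ins_fst_of_ne n τ' p' s' hp2' ⟨p, by omega⟩ hi
    have h2 := congrFun h (⟨p, by omega⟩ : Fin (n+1))
    rw [ins_eq_of_eq n τ p s ⟨p, by omega⟩ rfl, hk] at h2
    have h3 : ((Fin.last n : Fin (n+1)) : ℕ) = ((τ' k).1.castSucc : ℕ) :=
      congrArg (fun x => (x.1 : ℕ)) h2
    simp [Fin.last] at h3
    have := (τ' k).1.isLt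
    omega
  subst hpp
  have hs : s = s' := by
    have h2 := congrFun h (⟨p, by omega⟩ : Fin (n+1))
    rw [ins_eq_of_eq n τ p s ⟨p, by omega⟩ rfl, ins_eq_of_eq n τ' p s' ⟨p, by omega⟩ rfl] at h2
    exact congrArg Prod.snd h2
  refine ⟨funext fun k => ?_, rfl, hs⟩
  have h2 := congrFun h (emb n p k)
  rw [ins_emb n τ p s hp2 k, ins_emb n τ' p s' hp2 k] at h2
  exact lift_injective h2

lemma ins_surj (n : ℕ) (j : ℤ) (hn : 1 ≤ n) (hj1 : 1 ≤ j) (hj2 : j ≤ n)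
    (f : Fin (n+1) → Fin (n+1) × Bool) (hf : f ∈ BplusSet (n+1) j) :
    ∃ (τ : Fin n → Fin n × Bool) (p : ℕ) (s : Bool),
      IsSignedPerm n τ ∧ sval n τ 0 = j ∧ 1 ≤ p ∧ p ≤ n ∧
      ins n τ p s = f ∧ (p = n → s = true) ∧ (p < n → 0 < sval n τ (n-1)) := by
  simp only [BplusSet, Finset.mem_filter, Finset.mem_univ, true_and] at hf
  obtain ⟨hperm, h0, hpos⟩ := hf
  -- find the position of the largest letter
  have hsurj : Function.Surjective (fun i => (f i).1) :=
    Finite.surjective_of_injective hperm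
  obtain ⟨pf, hpf⟩ := hsurj (Fin.last n)
  have hpf' : (f pf).1 = Fin.last n := hpf
  have hvlt : ∀ i : Fin (n+1), i ≠ pf → ((f i).1 : ℕ) < n := by
    intro i hi
    have : (f i).1 ≠ (f pf).1 := fun hc => hi (hperm hc)
    rw [hpf'] at this
    have h1 : ((f i).1 : ℕ) ≤ n := Nat.lt_succ_iff.mp (f i).1.isLt
    have h2 : ((f i).1 : ℕ) ≠ n := by
      intro hc; exact this (Fin.ext (by simp [Fin.last, hc]))
    omega
  set p : ℕ := (pf : ℕ) with hpdef
  have hpn : p ≤ n := Nat.lt_succ_iff.mp pf.isLt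
  have hp1 : 1 ≤ p := by
    rcases Nat.eq_zero_or_pos p with h | h
    · exfalso
      have hpf0 : pf = (⟨0, by omega⟩ : Fin (n+1)) := Fin.ext (by exact h)
      have hs0 : sval (n+1) f 0 = BVal (n+1) f pf := by
        unfold sval
        rw [dif_pos (by omega : 0 < n+1)]
        exact congrArg (BVal (n+1) f) hpf0.symm
      have hB : BVal (n+1) f pf
          = if (f pf).2 then ((f pf).1 : ℤ) + 1 else -(((f pf).1 : ℤ) + 1) := rfl
      rw [hpf'] at hB
      simp only [Fin.val_last] at hB
      have hj0 : j = if (f pf).2 then (n:ℤ)+1 else -((n:ℤ)+1) := by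
        rw [← h0, hs0, hB]
      split at hj0 <;> omega
    · exact h
  set s : Bool := (f pf).2 with hsdef
  set τ : Fin n → Fin n × Bool := del n f p with hτdef
  have hins : ins n τ p s = f := by
    funext i
    by_cases hip : (i : ℕ) = p
    · have hipf : i = pf := Fin.ext (by omega)
      rw [ins_eq_of_eq n τ p s i hip, hipf]
      exact Prod.ext hpf'.symm rfl
    · obtain ⟨m, hm, hmv⟩ := ins_fst_of_ne n τ p s hpn i hip
      rw [hm]
      have him : (if ((m : ℕ) < p) then (m.castSucc : Fin (n+1)) else m.succ) = i := by
        apply Fin.ext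
        have hiv := i.isLt
        by_cases h : (i : ℕ) < p
        · have hm2 : (m : ℕ) = (i : ℕ) := by rw [hmv, if_pos h]
          rw [if_pos (by rw [hm2]; exact h)]
          simp [hm2]
        · have hm2 : (m : ℕ) = (i : ℕ) - 1 := by rw [hmv, if_neg h]
          have hip2 : p < (i : ℕ) := by omega
          rw [if_neg (by rw [hm2]; omega)]
          simp [hm2]
          omega
      have hτm : τ m = (⟨((f i).1 : ℕ) % n, Nat.mod_lt _ m.pos⟩, (f i).2) := by
        rw [hτdef]
        unfold del
        simp only [him]
      rw [hτm]
      unfold lift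
      have hlt : ((f i).1 : ℕ) < n := hvlt i (fun hc => hip (by rw [hc]))
      have : ((f i).1 : ℕ) % n = ((f i).1 : ℕ) := Nat.mod_eq_of_lt hlt
      refine Prod.ext (Fin.ext ?_) rfl
      simp [this]
  have hτperm : IsSignedPerm n τ := by
    intro k k' hkk
    have e1 := congrFun hins (emb n p k)
    have e2 := congrFun hins (emb n p k')
    rw [ins_emb n τ p s hpn k] at e1
    rw [ins_emb n τ p s hpn k'] at e2
    have : (lift (τ k)).1 = (lift (τ k')).1 := by
      simp only [lift]
      exact congrArg Fin.castSucc hkk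
    have hfe : (f (emb n p k)).1 = (f (emb n p k')).1 := by
      rw [← e1, ← e2]; exact this
    have hee : emb n p k = emb n p k' := hperm hfe
    have hev := congrArg (fun x : Fin (n+1) => (x : ℕ)) hee
    simp only [emb_val] at hev
    apply Fin.ext
    split_ifs at hev <;> omega
  refine ⟨τ, p, s, hτperm, ?_, hp1, hpn, hins, ?_, ?_⟩
  · rw [← h0, ← hins, sval_ins_lt n τ p s hpn 0 (by omega)]
  · intro hpe
    rw [← hins, show (n+1) - 1 = n from rfl, hpe] at hpos
    rw [sval_ins_eq n τ n s le_rfl] at hpos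
    cases hs : s
    · rw [hs, if_neg (by simp)] at hpos; omega
    · rfl
  · intro hlt
    rw [← hins, show (n+1) - 1 = n from rfl, sval_ins_gt n τ p s n hlt le_rfl] at hpos
    exact hpos

end BRec
namespace BRec

def Jset (n : ℕ) (j : ℤ) : Finset ((Fin n → Fin n × Bool) × ℕ × Bool) :=
  ((Finset.univ.filter fun τ => IsSignedPerm n τ ∧ sval n τ 0 = j) ×ˢ
      (({n} : Finset ℕ) ×ˢ ({true} : Finset Bool)))
  ∪ ((BplusSet n j) ×ˢ ((Finset.Ico 1 n) ×ˢ (Finset.univ : Finset Bool)))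

lemma sum_bij_main (n : ℕ) (j : ℤ) (hn : 1 ≤ n) (hj1 : 1 ≤ j) (hj2 : j ≤ (n:ℤ)) :
    BplusPoly (n+1) j
      = ∑ x ∈ Jset n j, (X : Polynomial ℝ) ^ desB (n+1) (ins n x.1 x.2.1 x.2.2) := by
  rw [BplusPoly]
  refine (Finset.sum_bij (fun x _ => ins n x.1 x.2.1 x.2.2) ?_ ?_ ?_ ?_).symm
  · rintro ⟨τ, p, s⟩ hx
    simp only [Jset, Finset.mem_union, Finset.mem_product, Finset.mem_singleton,
      Finset.mem_filter, Finset.mem_univ, true_and, Finset.mem_Ico] at hx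
    rcases hx with ⟨⟨h1, h2⟩, hp, hs⟩ | ⟨h1, ⟨hp1, hp2⟩, -⟩
    · show ins n τ p s ∈ BplusSet (n+1) j
      rw [hp, hs]
      exact ins_mem_last n j τ hn h1 h2
    · exact ins_mem_interior n j τ p s hp1 hp2 h1
  · rintro ⟨τ, p, s⟩ hx ⟨τ', p', s'⟩ hx' h
    simp only [Jset, Finset.mem_union, Finset.mem_product, Finset.mem_singleton,
      Finset.mem_filter, Finset.mem_univ, true_and, Finset.mem_Ico] at hx hx'
    have hb : 1 ≤ p ∧ p ≤ n := by
      rcases hx with ⟨-, hp, -⟩ | ⟨-, ⟨hp1, hp2⟩, -⟩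
      · omega
      · omega
    have hb' : 1 ≤ p' ∧ p' ≤ n := by
      rcases hx' with ⟨-, hp, -⟩ | ⟨-, ⟨hp1, hp2⟩, -⟩
      · omega
      · omega
    obtain ⟨e1, e2, e3⟩ := ins_inj n τ τ' p p' s s' hb.1 hb.2 hb'.1 hb'.2 h
    simp [e1, e2, e3]
  · intro f hf
    obtain ⟨τ, p, s, h1, h2, h3, h4, h5, h6, h7⟩ := ins_surj n j hn hj1 hj2 f hf
    refine ⟨(τ, p, s), ?_, h5⟩
    simp only [Jset, Finset.mem_union, Finset.mem_product, Finset.mem_singleton,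
      Finset.mem_filter, Finset.mem_univ, true_and, Finset.mem_Ico, and_true]
    rcases Nat.lt_or_ge p n with hlt | hge
    · refine Or.inr ⟨?_, h3, hlt⟩
      simp only [BplusSet, Finset.mem_filter, Finset.mem_univ, true_and]
      exact ⟨h1, h2, h7 hlt⟩
    · have hpe : p = n := by omega
      exact Or.inl ⟨⟨h1, h2⟩, hpe, h6 hpe⟩
  · intro x hx
    rfl

lemma desB_eq_card (d : ℕ) (f : Fin d → Fin d × Bool) :
    desB d f = ((Finset.range d).filter (fun i => dcond d f i)).card := by
  unfold desB dcond
  congr 1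

lemma poly_id (n k : ℕ) (hn : 1 ≤ n) (hk : k ≤ n - 1) :
    (k • ((2:Polynomial ℝ) * X^k) + ((n-1)-k) • ((2:Polynomial ℝ) * X^(k+1)))
      = C (2 * ((n:ℝ) - 1)) * X * X ^ k
        + 2 * X * (1 - X) * derivative ((X : Polynomial ℝ) ^ k) := by
  have hC : (C (2 * ((n:ℝ) - 1)) : Polynomial ℝ) = 2 * ((n : Polynomial ℝ) - 1) := by
    rw [map_mul, map_sub, map_one, map_ofNat, Polynomial.C_eq_natCast]
  rw [hC, nsmul_eq_mul, nsmul_eq_mul]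
  have hcast : (((n-1)-k : ℕ) : Polynomial ℝ) = (n : Polynomial ℝ) - 1 - (k : Polynomial ℝ) := by
    push_cast [Nat.cast_sub hk, Nat.cast_sub hn]
    ring
  rw [hcast]
  cases k with
  | zero =>
    norm_num
    ring
  | succ m =>
    rw [Polynomial.derivative_X_pow, Polynomial.C_eq_natCast]
    simp only [Nat.add_sub_cancel]
    push_cast
    ring

lemma inner_sum (n : ℕ) (j : ℤ) (hn : 1 ≤ n) (hj1 : 1 ≤ j)
    (τ : Fin n → Fin n × Bool) (hτ : τ ∈ BplusSet n j) :
    ∑ p ∈ Finset.Ico 1 n, ∑ s : Bool, (X : Polynomial ℝ) ^ desB (n+1) (ins n τ p s)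
      = C (2 * ((n:ℝ) - 1)) * X * X ^ (desB n τ)
        + 2 * X * (1 - X) * derivative ((X : Polynomial ℝ) ^ (desB n τ)) := by
  simp only [BplusSet, Finset.mem_filter, Finset.mem_univ, true_and] at hτ
  obtain ⟨hperm, h0, hpos⟩ := hτ
  set k := desB n τ with hk
  have hno0 : ¬ dcond n τ 0 := by
    unfold dcond
    rw [if_pos rfl, h0]
    omega
  have hfilter : (Finset.Ico 1 n).filter (fun p => dcond n τ p)
      = (Finset.range n).filter (fun i => dcond n τ i) := by
    ext i
    simp only [Finset.mem_filter, Finset.mem_Ico, Finset.mem_range]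
    constructor
    · rintro ⟨⟨h1, h2⟩, h3⟩; exact ⟨h2, h3⟩
    · rintro ⟨h1, h2⟩
      refine ⟨⟨?_, h1⟩, h2⟩
      by_contra hcc
      have : i = 0 := by omega
      rw [this] at h2
      exact hno0 h2
  have hc : ((Finset.Ico 1 n).filter (fun p => dcond n τ p)).card = k := by
    rw [hfilter, hk, desB_eq_card]
  have hck : k ≤ n - 1 := by
    have h1 := Finset.card_filter_le (Finset.Ico 1 n) (fun p => dcond n τ p)
    rw [hc, Nat.card_Ico] at h1
    omega
  have hc2 : ((Finset.Ico 1 n).filter (fun p => ¬ dcond n τ p)).card = (n-1) - k := by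
    have h1 := Finset.card_filter_add_card_filter_not
      (s := Finset.Ico 1 n) (p := fun p => dcond n τ p)
    rw [hc, Nat.card_Ico] at h1
    omega
  have step1 : ∑ p ∈ Finset.Ico 1 n, ∑ s : Bool, (X : Polynomial ℝ) ^ desB (n+1) (ins n τ p s)
      = ∑ p ∈ Finset.Ico 1 n,
          (if dcond n τ p then (2:Polynomial ℝ) * X^k else (2:Polynomial ℝ) * X^(k+1)) := by
    apply Finset.sum_congr rfl
    intro p hp
    rw [Finset.mem_Ico] at hp
    have hdes : ∀ s : Bool, desB (n+1) (ins n τ p s) = if dcond n τ p then k else k+1 := by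
      intro s
      have h1 := desB_ins_interior n τ p s hp.1 hp.2
      split_ifs at h1 ⊢ <;> omega
    rw [Fintype.sum_bool, hdes true, hdes false]
    split_ifs <;> ring
  rw [step1, Finset.sum_ite, Finset.sum_const, Finset.sum_const, hc, hc2]
  exact poly_id n k hn hck

end BRec

/-- for `d ≥ 2` and `1 ≤ j ≤ d−1`,
`B^+_{d,j}(t) = 2(d−2) t B^+_{d−1,j}(t) + 2t(1−t) (B^+_{d−1,j})'(t) + B_{d−1,j}(t)`. -/
theorem BplusPoly_diff_recurrence (d : ℕ) (j : ℤ) (hd : 2 ≤ d) (hj : 1 ≤ j)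
    (hjd : j ≤ (d : ℤ) - 1) :
    BplusPoly d j =
      C (2 * ((d : ℝ) - 2)) * X * BplusPoly (d - 1) j
      + 2 * X * (1 - X) * derivative (BplusPoly (d - 1) j)
      + BPoly (d - 1) j := by
  obtain ⟨n, rfl⟩ : ∃ n, d = n + 1 := ⟨d - 1, by omega⟩
  have hn : 1 ≤ n := by omega
  have hj2 : j ≤ (n : ℤ) := by push_cast at hjd; omega
  simp only [Nat.add_sub_cancel]
  push_cast
  have part1 : ∑ x ∈ (Finset.univ.filter fun τ => IsSignedPerm n τ ∧ sval n τ 0 = j) ×ˢ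
      (({n} : Finset ℕ) ×ˢ ({true} : Finset Bool)),
      (X : Polynomial ℝ) ^ desB (n+1) (BRec.ins n x.1 x.2.1 x.2.2) = BPoly n j := by
    rw [Finset.sum_product, BPoly]
    apply Finset.sum_congr rfl
    intro τ hτ
    rw [Finset.singleton_product_singleton, Finset.sum_singleton]
    show (X : Polynomial ℝ) ^ desB (n+1) (BRec.ins n τ n true) = _
    rw [BRec.desB_ins_last n τ hn]
  have part2 : ∑ x ∈ (BplusSet n j) ×ˢ ((Finset.Ico 1 n) ×ˢ (Finset.univ : Finset Bool)),
      (X : Polynomial ℝ) ^ desB (n+1) (BRec.ins n x.1 x.2.1 x.2.2)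
      = C (2 * ((n:ℝ) - 1)) * X * BplusPoly n j
        + 2 * X * (1 - X) * derivative (BplusPoly n j) := by
    rw [Finset.sum_product, BplusPoly]
    have key : ∀ τ ∈ BplusSet n j, (∑ y ∈ (Finset.Ico 1 n) ×ˢ (Finset.univ : Finset Bool),
        (X : Polynomial ℝ) ^ desB (n+1) (BRec.ins n τ y.1 y.2))
        = C (2 * ((n:ℝ) - 1)) * X * X ^ (desB n τ)
          + 2 * X * (1 - X) * derivative ((X : Polynomial ℝ) ^ (desB n τ)) := by
      intro τ hτ
      rw [Finset.sum_product]
      exact BRec.inner_sum n j hn hj τ hτ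
    rw [Finset.sum_congr rfl key, Finset.sum_add_distrib, ← Finset.mul_sum, ← Finset.mul_sum,
      ← map_sum derivative _ (BplusSet n j)]
  have hdisj : Disjoint
      ((Finset.univ.filter fun τ => IsSignedPerm n τ ∧ sval n τ 0 = j) ×ˢ
        (({n} : Finset ℕ) ×ˢ ({true} : Finset Bool)))
      ((BplusSet n j) ×ˢ ((Finset.Ico 1 n) ×ˢ (Finset.univ : Finset Bool))) := by
    rw [Finset.disjoint_left]
    rintro ⟨τ, p, s⟩ h1 h2
    simp only [Finset.mem_product, Finset.mem_singleton, Finset.mem_Ico,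
      Finset.mem_filter, Finset.mem_univ, true_and] at h1 h2
    omega
  rw [BRec.sum_bij_main n j hn hj hj2, BRec.Jset, Finset.sum_union hdisj, part1, part2]
  have hc : (2 * ((n:ℝ) + 1 - 2)) = 2 * ((n:ℝ) - 1) := by ring
  rw [hc]
  ring
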